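/- Let a, b, c be real numbers with 0 < a < c ≤ b. There exists a constant C > 0 such that for all sufficiently large T, ∑_{(n_2,n_3)} n_2^{(b−a)/(2a)} n_3^{(c−a)/(2a)} ≤ C · T^{(a+c)/(2c)} · log T, where the sum runs over pairs of positive integers (n_2, n_3) with n_2^{b/a} n_3^{c/a} ≤ a T/(2π). -/
import Mathlib

open Real

private lemma sum_ite_le (L : ℕ) {M w : ℝ} (hM : 0 ≤ M) (hw : 0 ≤ w) :
    ∑ n ∈ Finset.Icc 1 L, (if (n : ℝ) ≤ M then w else 0) ≤ M * w := by
  rw [← Finset.sum_filter, Finset.sum_const, nsmul_eq_mul]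
  have hsub : ((Finset.Icc 1 L).filter (fun n : ℕ => (n : ℝ) ≤ M)) ⊆ Finset.Icc 1 ⌊M⌋₊ := by
    intro n hn
    simp only [Finset.mem_filter, Finset.mem_Icc] at hn ⊢
    exact ⟨hn.1.1, Nat.le_floor hn.2⟩
  have hcard : (((Finset.Icc 1 L).filter (fun n : ℕ => (n : ℝ) ≤ M)).card : ℝ) ≤ M := by
    have h1 := Finset.card_le_card hsub
    have h2 : (Finset.Icc 1 ⌊M⌋₊).card = ⌊M⌋₊ := by simp
    have h3 : ((⌊M⌋₊ : ℕ) : ℝ) ≤ M := Nat.floor_le hM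
    calc (((Finset.Icc 1 L).filter (fun n : ℕ => (n : ℝ) ≤ M)).card : ℝ)
        ≤ ((Finset.Icc 1 ⌊M⌋₊).card : ℝ) := by exact_mod_cast h1
      _ = (⌊M⌋₊ : ℝ) := by rw [h2]
      _ ≤ M := h3
  exact mul_le_mul_of_nonneg_right hcard hw

private lemma harmonic_sum_le (K : ℕ) :
    ∑ n ∈ Finset.Icc 1 K, ((n : ℝ))⁻¹ ≤ 1 + Real.log K := by
  have h := harmonic_le_one_add_log K
  have heq : ((harmonic K : ℚ) : ℝ) = ∑ n ∈ Finset.Icc 1 K, ((n : ℝ))⁻¹ := by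
    rw [harmonic_eq_sum_Icc]; push_cast; ring
  linarith [heq ▸ h]

theorem stmt_6 (a b c : ℝ) (ha : 0 < a) (hac : a < c) (hcb : c ≤ b) :
    ∃ C > 0, ∃ T₀ : ℝ, ∀ T ≥ T₀,
      (∑' p : ℕ × ℕ,
        (if 0 < p.1 ∧ 0 < p.2 ∧ (p.1 : ℝ) ^ (b / a) * (p.2 : ℝ) ^ (c / a) ≤ a * T / (2 * π)
          then (p.1 : ℝ) ^ ((b - a) / (2 * a)) * (p.2 : ℝ) ^ ((c - a) / (2 * a)) else 0))
        ≤ C * T ^ ((a + c) / (2 * c)) * Real.log T := by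
  have hc : 0 < c := ha.trans hac
  have hb : 0 < b := hc.trans_le hcb
  have hab : a < b := hac.trans_le hcb
  have hπ : (0:ℝ) < π := Real.pi_pos
  set β : ℝ := (a + c) / (2 * c) with hβ
  have hβpos : 0 < β := by positivity
  refine ⟨3 * (a / (2*π)) ^ β, by positivity, 2*π/a + a/(2*π) + 3, ?_⟩
  intro T hT
  have hh1 : 0 < 2*π/a := by positivity
  have hh2 : 0 < a/(2*π) := by positivity
  have hT3 : (3:ℝ) ≤ T := by linarith
  have hT0 : 0 < T := by linarith
  have hlogT : 1 ≤ Real.log T := by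
    rw [Real.le_log_iff_exp_le hT0]
    calc Real.exp 1 ≤ 2.7182818286 := Real.exp_one_lt_d9.le
      _ ≤ T := by linarith
  set X : ℝ := a * T / (2*π) with hXdef
  have hX1 : (1:ℝ) ≤ X := by
    rw [hXdef, le_div_iff₀ (by positivity)]
    have h2 : 2*π/a ≤ T := by linarith
    have h3 := mul_le_mul_of_nonneg_left h2 ha.le
    have h4 : a * (2*π/a) = 2*π := by field_simp
    nlinarith
  have hX0 : (0:ℝ) < X := lt_of_lt_of_le one_pos hX1
  have hXT : X ≤ T * T := by
    rw [hXdef, div_le_iff₀ (by positivity)]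
    have h2 : a/(2*π) ≤ T := by linarith
    have h5 : a ≤ T * (2*π) := (div_le_iff₀ (by positivity)).mp h2
    nlinarith
  set K : ℕ := ⌊X ^ (a/b)⌋₊ with hK
  set L : ℕ := ⌊X ^ (a/c)⌋₊ with hL
  have hsupp : ∀ p : ℕ × ℕ, p ∉ Finset.Icc 1 K ×ˢ Finset.Icc 1 L →
      (if 0 < p.1 ∧ 0 < p.2 ∧ (p.1 : ℝ) ^ (b / a) * (p.2 : ℝ) ^ (c / a) ≤ X
        then (p.1 : ℝ) ^ ((b - a) / (2 * a)) * (p.2 : ℝ) ^ ((c - a) / (2 * a)) else 0) = 0 := by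
    intro p hp
    rw [if_neg]
    intro hcond
    obtain ⟨h1, h2, h3⟩ := hcond
    have h1R : (1:ℝ) ≤ (p.1 : ℝ) := by exact_mod_cast h1
    have h2R : (1:ℝ) ≤ (p.2 : ℝ) := by exact_mod_cast h2
    have hp1pow : (1:ℝ) ≤ (p.1:ℝ) ^ (b/a) := Real.one_le_rpow h1R (by positivity)
    have hp2pow : (1:ℝ) ≤ (p.2:ℝ) ^ (c/a) := Real.one_le_rpow h2R (by positivity)
    have hA : (p.1:ℝ) ^ (b/a) ≤ X := by nlinarith
    have hB : (p.2:ℝ) ^ (c/a) ≤ X := by nlinarith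
    have hba : (b/a) * (a/b) = 1 := by field_simp
    have hca : (c/a) * (a/c) = 1 := by field_simp
    have hp1le : (p.1 : ℝ) ≤ X ^ (a/b) := by
      calc (p.1:ℝ) = (p.1:ℝ) ^ ((b/a) * (a/b)) := by rw [hba, Real.rpow_one]
        _ = ((p.1:ℝ) ^ (b/a)) ^ (a/b) := Real.rpow_mul (Nat.cast_nonneg _) _ _
        _ ≤ X ^ (a/b) := Real.rpow_le_rpow (by positivity) hA (by positivity)
    have hp2le : (p.2 : ℝ) ≤ X ^ (a/c) := by
      calc (p.2:ℝ) = (p.2:ℝ) ^ ((c/a) * (a/c)) := by rw [hca, Real.rpow_one]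
        _ = ((p.2:ℝ) ^ (c/a)) ^ (a/c) := Real.rpow_mul (Nat.cast_nonneg _) _ _
        _ ≤ X ^ (a/c) := Real.rpow_le_rpow (by positivity) hB (by positivity)
    exact hp (Finset.mem_product.mpr ⟨Finset.mem_Icc.mpr ⟨h1, Nat.le_floor hp1le⟩,
      Finset.mem_Icc.mpr ⟨h2, Nat.le_floor hp2le⟩⟩)
  rw [tsum_eq_sum hsupp, Finset.sum_product]
  have hinner : ∀ n2 ∈ Finset.Icc 1 K,
      (∑ n3 ∈ Finset.Icc 1 L,
        (if 0 < n2 ∧ 0 < n3 ∧ (n2 : ℝ) ^ (b / a) * (n3 : ℝ) ^ (c / a) ≤ X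
          then (n2 : ℝ) ^ ((b - a) / (2 * a)) * (n3 : ℝ) ^ ((c - a) / (2 * a)) else 0))
      ≤ X ^ β * ((n2:ℝ))⁻¹ := by
    intro n2 hn2mem
    have hn2 : 1 ≤ n2 := (Finset.mem_Icc.mp hn2mem).1
    have hn2R : (1:ℝ) ≤ (n2:ℝ) := by exact_mod_cast hn2
    have hn2pos : (0:ℝ) < (n2:ℝ) := by linarith
    have hpow2pos : (0:ℝ) < (n2:ℝ) ^ (b/a) := Real.rpow_pos_of_pos hn2pos _
    set M : ℝ := (X / (n2:ℝ) ^ (b/a)) ^ (a/c) with hM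
    have hMpos : 0 < M := Real.rpow_pos_of_pos (div_pos hX0 hpow2pos) _
    have he3 : 0 ≤ (c - a) / (2*a) := div_nonneg (by linarith) (by linarith)
    have step1 : (∑ n3 ∈ Finset.Icc 1 L,
        (if 0 < n2 ∧ 0 < n3 ∧ (n2 : ℝ) ^ (b / a) * (n3 : ℝ) ^ (c / a) ≤ X
          then (n2 : ℝ) ^ ((b - a) / (2 * a)) * (n3 : ℝ) ^ ((c - a) / (2 * a)) else 0))
        ≤ ∑ n3 ∈ Finset.Icc 1 L,
          (if (n3:ℝ) ≤ M then (n2:ℝ) ^ ((b - a) / (2 * a)) * M ^ ((c - a) / (2 * a)) else 0) := by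
      apply Finset.sum_le_sum
      intro n3 _
      by_cases hcond : 0 < n2 ∧ 0 < n3 ∧ (n2 : ℝ) ^ (b / a) * (n3 : ℝ) ^ (c / a) ≤ X
      · rw [if_pos hcond]
        obtain ⟨-, h2, h3⟩ := hcond
        have hdiv : (n3:ℝ) ^ (c/a) ≤ X / (n2:ℝ) ^ (b/a) := by
          rw [le_div_iff₀ hpow2pos]
          calc (n3:ℝ) ^ (c/a) * (n2:ℝ) ^ (b/a) = (n2:ℝ) ^ (b/a) * (n3:ℝ) ^ (c/a) := by ring
            _ ≤ X := h3
        have hca : (c/a) * (a/c) = 1 := by field_simp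
        have h3M : (n3:ℝ) ≤ M := by
          calc (n3:ℝ) = (n3:ℝ) ^ ((c/a) * (a/c)) := by rw [hca, Real.rpow_one]
            _ = ((n3:ℝ) ^ (c/a)) ^ (a/c) := Real.rpow_mul (Nat.cast_nonneg _) _ _
            _ ≤ M := Real.rpow_le_rpow (by positivity) hdiv (by positivity)
        rw [if_pos h3M]
        have hmono : (n3:ℝ) ^ ((c - a) / (2*a)) ≤ M ^ ((c - a) / (2*a)) :=
          Real.rpow_le_rpow (Nat.cast_nonneg _) h3M he3
        exact mul_le_mul_of_nonneg_left hmono (by positivity)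
      · rw [if_neg hcond]
        split_ifs
        · positivity
        · exact le_refl 0
    have step2 : (∑ n3 ∈ Finset.Icc 1 L,
          (if (n3:ℝ) ≤ M then (n2:ℝ) ^ ((b - a) / (2 * a)) * M ^ ((c - a) / (2 * a)) else 0))
        ≤ M * ((n2:ℝ) ^ ((b - a) / (2 * a)) * M ^ ((c - a) / (2 * a))) :=
      sum_ite_le L hMpos.le (by positivity)
    have hexp : (a/c) * (1 + (c - a) / (2*a)) = β := by
      rw [hβ]; field_simp; ring
    have hM2 : M * M ^ ((c - a) / (2*a)) = X ^ β / (n2:ℝ) ^ ((b/a) * β) := by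
      calc M * M ^ ((c - a) / (2*a)) = M ^ ((1:ℝ) + (c - a) / (2*a)) := by
            rw [Real.rpow_add hMpos, Real.rpow_one]
        _ = ((X / (n2:ℝ) ^ (b/a)) ^ (a/c)) ^ ((1:ℝ) + (c - a) / (2*a)) := by rw [hM]
        _ = (X / (n2:ℝ) ^ (b/a)) ^ ((a/c) * (1 + (c - a) / (2*a))) := by
            rw [← Real.rpow_mul (div_nonneg hX0.le hpow2pos.le)]
        _ = (X / (n2:ℝ) ^ (b/a)) ^ β := by rw [hexp]
        _ = X ^ β / ((n2:ℝ) ^ (b/a)) ^ β := Real.div_rpow hX0.le hpow2pos.le _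
        _ = X ^ β / (n2:ℝ) ^ ((b/a) * β) := by rw [← Real.rpow_mul hn2pos.le]
    have halg : M * ((n2:ℝ) ^ ((b - a) / (2 * a)) * M ^ ((c - a) / (2 * a)))
        = X ^ β * (n2:ℝ) ^ ((b - a) / (2*a) - (b/a) * β) := by
      calc M * ((n2:ℝ) ^ ((b - a) / (2 * a)) * M ^ ((c - a) / (2 * a)))
          = (n2:ℝ) ^ ((b - a) / (2 * a)) * (M * M ^ ((c - a) / (2*a))) := by ring
        _ = (n2:ℝ) ^ ((b - a) / (2 * a)) * (X ^ β / (n2:ℝ) ^ ((b/a) * β)) := by rw [hM2]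
        _ = X ^ β * ((n2:ℝ) ^ ((b - a) / (2 * a)) / (n2:ℝ) ^ ((b/a) * β)) := by ring
        _ = X ^ β * (n2:ℝ) ^ ((b - a) / (2*a) - (b/a) * β) := by
            rw [Real.rpow_sub hn2pos]
    have hexple : (b - a) / (2*a) - (b/a) * β ≤ -1 := by
      have heq : (b - a) / (2*a) - (b/a) * β = -((b + c) / (2*c)) := by
        rw [hβ]; field_simp; ring
      rw [heq, neg_le, neg_neg]
      rw [le_div_iff₀ (by positivity)]
      linarith
    have hfinal : (n2:ℝ) ^ ((b - a) / (2*a) - (b/a) * β) ≤ ((n2:ℝ))⁻¹ := by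
      calc (n2:ℝ) ^ ((b - a) / (2*a) - (b/a) * β) ≤ (n2:ℝ) ^ (-1 : ℝ) :=
            Real.rpow_le_rpow_of_exponent_le hn2R hexple
        _ = ((n2:ℝ))⁻¹ := Real.rpow_neg_one _
    calc (∑ n3 ∈ Finset.Icc 1 L,
        (if 0 < n2 ∧ 0 < n3 ∧ (n2 : ℝ) ^ (b / a) * (n3 : ℝ) ^ (c / a) ≤ X
          then (n2 : ℝ) ^ ((b - a) / (2 * a)) * (n3 : ℝ) ^ ((c - a) / (2 * a)) else 0))
        ≤ M * ((n2:ℝ) ^ ((b - a) / (2 * a)) * M ^ ((c - a) / (2 * a))) := step1.trans step2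
      _ = X ^ β * (n2:ℝ) ^ ((b - a) / (2*a) - (b/a) * β) := halg
      _ ≤ X ^ β * ((n2:ℝ))⁻¹ := mul_le_mul_of_nonneg_left hfinal (by positivity)
  have hKpos : (0:ℝ) < (K:ℝ) := by
    have : 1 ≤ K := Nat.le_floor (by
      simpa using Real.one_le_rpow hX1 (by positivity : (0:ℝ) ≤ a/b))
    exact_mod_cast this
  have hKle : (K:ℝ) ≤ T * T := by
    have h1 : X ^ (a/b) ≤ X := by
      calc X ^ (a/b) ≤ X ^ (1:ℝ) := Real.rpow_le_rpow_of_exponent_le hX1 (by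
            rw [div_le_one hb]; linarith)
        _ = X := Real.rpow_one X
    exact (Nat.floor_le (by positivity)).trans (h1.trans hXT)
  have hlogK : Real.log K ≤ 2 * Real.log T := by
    calc Real.log K ≤ Real.log (T * T) := Real.log_le_log hKpos hKle
      _ = Real.log T + Real.log T := Real.log_mul hT0.ne' hT0.ne'
      _ = 2 * Real.log T := by ring
  calc (∑ n2 ∈ Finset.Icc 1 K, ∑ n3 ∈ Finset.Icc 1 L,
        (if 0 < n2 ∧ 0 < n3 ∧ (n2 : ℝ) ^ (b / a) * (n3 : ℝ) ^ (c / a) ≤ X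
          then (n2 : ℝ) ^ ((b - a) / (2 * a)) * (n3 : ℝ) ^ ((c - a) / (2 * a)) else 0))
      ≤ ∑ n2 ∈ Finset.Icc 1 K, X ^ β * ((n2:ℝ))⁻¹ := Finset.sum_le_sum hinner
    _ = X ^ β * ∑ n2 ∈ Finset.Icc 1 K, ((n2:ℝ))⁻¹ := by rw [Finset.mul_sum]
    _ ≤ X ^ β * (1 + Real.log K) :=
        mul_le_mul_of_nonneg_left (harmonic_sum_le K) (by positivity)
    _ ≤ X ^ β * (3 * Real.log T) := by
        have h4 : 1 + Real.log K ≤ 3 * Real.log T := by linarith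
        exact mul_le_mul_of_nonneg_left h4 (by positivity)
    _ = 3 * (a / (2*π)) ^ β * T ^ β * Real.log T := by
        have hXβ : X ^ β = (a/(2*π)) ^ β * T ^ β := by
          rw [hXdef, show a * T / (2*π) = (a/(2*π)) * T from by ring,
            Real.mul_rpow (by positivity) hT0.le]
        rw [hXβ]; ring
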